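/- For r ≥ 1 real numbers β_1, ..., β_r all nonzero and k ≥ 3, define p_i = ∫_0^∞ √(2/π) e^{−x²/2} ∏_{ℓ≠i} (∫_0^{(|β_i|/|β_ℓ|)^{1/(k−2)} x} √(2/π) e^{−y²/2} dy) dx. Then p_i > 0 for every i, Σ_{i=1}^r p_i = 1, and if |β_i| ≥ |β_j| then p_i ≥ p_j. -/

import Mathlib

open MeasureTheory

noncomputable def gaussF (x : ℝ) : ℝ := Real.sqrt (2 / Real.pi) * Real.exp (-x ^ 2 / 2)

noncomputable def PhiF (t : ℝ) : ℝ := ∫ y in (0:ℝ)..t, gaussF y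

lemma gaussF_pos (x : ℝ) : 0 < gaussF x :=
  mul_pos (Real.sqrt_pos.2 (by positivity)) (Real.exp_pos _)

lemma gaussF_cont : Continuous gaussF := by
  unfold gaussF; fun_prop

lemma gaussF_eq (x : ℝ) : gaussF x = Real.sqrt (2 / Real.pi) * Real.exp (-(1/2) * x ^ 2) := by
  unfold gaussF; ring_nf

lemma gaussF_integrable : Integrable gaussF := by
  have h : Integrable (fun x : ℝ => Real.exp (-(1/2) * x ^ 2)) :=
    integrable_exp_neg_mul_sq (by norm_num)
  exact (h.const_mul (Real.sqrt (2 / Real.pi))).congr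
    (Filter.Eventually.of_forall fun x => (gaussF_eq x).symm)

lemma integral_gaussF_Ioi : ∫ x in Set.Ioi (0:ℝ), gaussF x = 1 := by
  have h : ∫ x in Set.Ioi (0:ℝ), Real.exp (-(1/2) * x ^ 2) = Real.sqrt (Real.pi / (1/2)) / 2 :=
    integral_gaussian_Ioi (1/2)
  have : ∫ x in Set.Ioi (0:ℝ), gaussF x
      = Real.sqrt (2 / Real.pi) * ∫ x in Set.Ioi (0:ℝ), Real.exp (-(1/2) * x ^ 2) := by
    rw [← integral_const_mul]
    exact setIntegral_congr_fun measurableSet_Ioi (fun x _ => gaussF_eq x)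
  rw [this, h, ← mul_div_assoc, ← Real.sqrt_mul (by positivity)]
  have h4 : (2 / Real.pi) * (Real.pi / (1/2)) = 4 := by
    have := Real.pi_ne_zero; field_simp; ring
  rw [h4, show (4:ℝ) = 2^2 by norm_num, Real.sqrt_sq (by norm_num)]
  norm_num

lemma gaussF_intInt (a b : ℝ) : IntervalIntegrable gaussF volume a b :=
  gaussF_cont.intervalIntegrable a b

lemma PhiF_hasDerivAt (t : ℝ) : HasDerivAt PhiF (gaussF t) t :=
  intervalIntegral.integral_hasDerivAt_right (gaussF_intInt 0 t)
    (gaussF_cont.stronglyMeasurableAtFilter _ _) gaussF_cont.continuousAt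

lemma PhiF_cont : Continuous PhiF :=
  continuous_iff_continuousAt.2 fun t => (PhiF_hasDerivAt t).continuousAt

lemma PhiF_zero : PhiF 0 = 0 := intervalIntegral.integral_same

lemma PhiF_mono {s t : ℝ} (h : s ≤ t) : PhiF s ≤ PhiF t := by
  have hadd : PhiF s + ∫ y in s..t, gaussF y = PhiF t :=
    intervalIntegral.integral_add_adjacent_intervals (gaussF_intInt 0 s) (gaussF_intInt s t)
  have hnn : 0 ≤ ∫ y in s..t, gaussF y :=
    intervalIntegral.integral_nonneg h (fun x _ => (gaussF_pos x).le)
  linarith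

lemma PhiF_nonneg {t : ℝ} (h : 0 ≤ t) : 0 ≤ PhiF t := by
  simpa [PhiF_zero] using PhiF_mono h

lemma PhiF_pos {t : ℝ} (h : 0 < t) : 0 < PhiF t :=
  intervalIntegral.intervalIntegral_pos_of_pos_on (gaussF_intInt 0 t)
    (fun x _ => gaussF_pos x) h

lemma PhiF_eq_Ioo {t : ℝ} (h : 0 ≤ t) : ∫ y in Set.Ioo (0:ℝ) t, gaussF y = PhiF t := by
  rw [PhiF, intervalIntegral.integral_of_le h, integral_Ioc_eq_integral_Ioo]

lemma PhiF_le_one (t : ℝ) : PhiF t ≤ 1 := by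
  rcases le_or_gt t 0 with h | h
  · calc PhiF t ≤ PhiF 0 := PhiF_mono h
      _ ≤ 1 := by rw [PhiF_zero]; norm_num
  · rw [← PhiF_eq_Ioo h.le, ← integral_gaussF_Ioi]
    refine setIntegral_mono_set gaussF_integrable.integrableOn
      (Filter.Eventually.of_forall fun x => (gaussF_pos x).le) ?_
    exact Filter.Eventually.of_forall fun x hx => hx.1

lemma PhiF_tendsto : Filter.Tendsto PhiF Filter.atTop (nhds 1) := by
  have := intervalIntegral_tendsto_integral_Ioi (0:ℝ)
    (gaussF_integrable.integrableOn (s := Set.Ioi 0)) Filter.tendsto_id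
  rwa [integral_gaussF_Ioi] at this

noncomputable def gAux {r : ℕ} (c : Fin r → ℝ) (i : Fin r) (u : ℝ) : ℝ :=
  (c i)⁻¹ * (gaussF (u / c i) * ∏ ℓ ∈ Finset.univ.erase i, PhiF (u / c ℓ))

noncomputable def HAux {r : ℕ} (c : Fin r → ℝ) (u : ℝ) : ℝ :=
  ∏ ℓ : Fin r, PhiF (u / c ℓ)

lemma gAux_int {r : ℕ} (c : Fin r → ℝ) (hc : ∀ i, 0 < c i) (i : Fin r) :
    IntegrableOn (gAux c i) (Set.Ioi 0) := by
  have hcont : Continuous (gAux c i) := by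
    unfold gAux
    refine continuous_const.mul (Continuous.mul ?_ ?_)
    · exact gaussF_cont.comp (continuous_id.div_const _)
    · exact continuous_finset_prod _ fun ℓ _ => PhiF_cont.comp (continuous_id.div_const _)
  have hbd : Integrable (fun u : ℝ => (c i)⁻¹ * gaussF (u / c i)) :=
    (gaussF_integrable.comp_div (hc i).ne').const_mul _
  refine Integrable.mono' hbd.integrableOn hcont.aestronglyMeasurable.restrict ?_
  refine (ae_restrict_iff' measurableSet_Ioi).2 (Filter.Eventually.of_forall fun u hu => ?_)
  have hu : (0:ℝ) < u := hu
  have hnn : ∀ ℓ : Fin r, 0 ≤ PhiF (u / c ℓ) := fun ℓ =>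
    PhiF_nonneg (div_nonneg hu.le (hc ℓ).le)
  have hpn : 0 ≤ ∏ ℓ ∈ Finset.univ.erase i, PhiF (u / c ℓ) :=
    Finset.prod_nonneg fun ℓ _ => hnn ℓ
  have hp1 : ∏ ℓ ∈ Finset.univ.erase i, PhiF (u / c ℓ) ≤ 1 :=
    Finset.prod_le_one (fun ℓ _ => hnn ℓ) (fun ℓ _ => PhiF_le_one _)
  rw [Real.norm_eq_abs, gAux, abs_of_nonneg (mul_nonneg (inv_nonneg.2 (hc i).le)
    (mul_nonneg (gaussF_pos _).le hpn))]
  have := mul_le_mul_of_nonneg_left hp1 (gaussF_pos (u / c i)).le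
  rw [mul_one] at this
  calc (c i)⁻¹ * (gaussF (u / c i) * ∏ ℓ ∈ Finset.univ.erase i, PhiF (u / c ℓ))
      ≤ (c i)⁻¹ * gaussF (u / c i) :=
        mul_le_mul_of_nonneg_left this (inv_nonneg.2 (hc i).le)

lemma HAux_hasDerivAt {r : ℕ} (c : Fin r → ℝ) (hc : ∀ i, 0 < c i) (u : ℝ) :
    HasDerivAt (HAux c) (∑ i, gAux c i u) u := by
  have h1 : ∀ ℓ ∈ (Finset.univ : Finset (Fin r)),
      HasDerivAt (fun u => PhiF (u / c ℓ)) (gaussF (u / c ℓ) * (1 / c ℓ)) u := by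
    intro ℓ _
    exact (PhiF_hasDerivAt (u / c ℓ)).comp u (by simpa using (hasDerivAt_id u).div_const (c ℓ) : HasDerivAt (fun x => x / c ℓ) (1 / c ℓ) u)
  have h2 := HasDerivAt.fun_finsetProd h1
  refine h2.congr_deriv ?_
  refine Finset.sum_congr rfl fun i _ => ?_
  simp only [gAux, smul_eq_mul]
  ring

theorem mixture_main {r : ℕ} (hr : 1 ≤ r) (c : Fin r → ℝ) (hc : ∀ i, 0 < c i)
    (q : Fin r → ℝ)
    (hq : ∀ i, q i = ∫ x in Set.Ioi (0:ℝ),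
        gaussF x * ∏ ℓ ∈ Finset.univ.erase i, PhiF (c i / c ℓ * x)) :
    (∀ i, 0 < q i) ∧ (∑ i, q i = 1) ∧ ∀ i j, c j ≤ c i → q j ≤ q i := by
  have hargnn : ∀ (i ℓ : Fin r) (x : ℝ), 0 ≤ x → 0 ≤ c i / c ℓ * x := fun i ℓ x hx =>
    mul_nonneg (div_nonneg (hc i).le (hc ℓ).le) hx
  have hprod_nonneg : ∀ (i : Fin r) (x : ℝ), 0 ≤ x →
      0 ≤ ∏ ℓ ∈ Finset.univ.erase i, PhiF (c i / c ℓ * x) := fun i x hx =>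
    Finset.prod_nonneg fun ℓ _ => PhiF_nonneg (hargnn i ℓ x hx)
  have hprod_le_one : ∀ (i : Fin r) (x : ℝ), 0 ≤ x →
      ∏ ℓ ∈ Finset.univ.erase i, PhiF (c i / c ℓ * x) ≤ 1 := fun i x hx =>
    Finset.prod_le_one (fun ℓ _ => PhiF_nonneg (hargnn i ℓ x hx)) (fun ℓ _ => PhiF_le_one _)
  have hcontI : ∀ i : Fin r,
      Continuous (fun x => gaussF x * ∏ ℓ ∈ Finset.univ.erase i, PhiF (c i / c ℓ * x)) :=
    fun i => gaussF_cont.mul (continuous_finset_prod _ fun ℓ _ =>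
      PhiF_cont.comp (continuous_const.mul continuous_id))
  have hint : ∀ i : Fin r, IntegrableOn
      (fun x => gaussF x * ∏ ℓ ∈ Finset.univ.erase i, PhiF (c i / c ℓ * x)) (Set.Ioi 0) := by
    intro i
    refine Integrable.mono' gaussF_integrable.integrableOn
      (hcontI i).aestronglyMeasurable.restrict ?_
    refine (ae_restrict_iff' measurableSet_Ioi).2 (Filter.Eventually.of_forall fun x hx => ?_)
    have hx : (0:ℝ) < x := hx
    rw [Real.norm_eq_abs, abs_of_nonneg (mul_nonneg (gaussF_pos x).le (hprod_nonneg i x hx.le))]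
    have := mul_le_mul_of_nonneg_left (hprod_le_one i x hx.le) (gaussF_pos x).le
    rwa [mul_one] at this
  -- positivity
  have hqpos : ∀ i, 0 < q i := by
    intro i
    rw [hq i]
    rw [setIntegral_pos_iff_support_of_nonneg_ae ?_ (hint i)]
    · have hsub : Set.Ioi (0:ℝ) ⊆ Function.support
          (fun x => gaussF x * ∏ ℓ ∈ Finset.univ.erase i, PhiF (c i / c ℓ * x)) ∩ Set.Ioi 0 := by
        intro x hx
        have hx : (0:ℝ) < x := hx
        refine ⟨?_, hx⟩
        have : 0 < gaussF x * ∏ ℓ ∈ Finset.univ.erase i, PhiF (c i / c ℓ * x) :=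
          mul_pos (gaussF_pos x) (Finset.prod_pos fun ℓ _ =>
            PhiF_pos (mul_pos (div_pos (hc i) (hc ℓ)) hx))
        exact this.ne'
      refine lt_of_lt_of_le ?_ (measure_mono hsub)
      simp [Real.volume_Ioi]
    · refine (ae_restrict_iff' measurableSet_Ioi).2 (Filter.Eventually.of_forall fun x hx => ?_)
      exact mul_nonneg (gaussF_pos x).le (hprod_nonneg i x (le_of_lt hx))
  refine ⟨hqpos, ?_, ?_⟩
  · -- sum equals one
    have hqi : ∀ i, q i = ∫ u in Set.Ioi (0:ℝ), gAux c i u := by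
      intro i
      rw [hq i]
      have hcomp := integral_comp_mul_left_Ioi
        (fun u => gaussF (u / c i) * ∏ ℓ ∈ Finset.univ.erase i, PhiF (u / c ℓ)) 0 (hc i)
      have heq : ∀ x : ℝ,
          gaussF (c i * x / c i) * ∏ ℓ ∈ Finset.univ.erase i, PhiF (c i * x / c ℓ)
            = gaussF x * ∏ ℓ ∈ Finset.univ.erase i, PhiF (c i / c ℓ * x) := by
        intro x
        rw [mul_comm (c i) x, mul_div_assoc, div_self (hc i).ne', mul_one]
        congr 1
        refine Finset.prod_congr rfl fun ℓ _ => ?_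
        congr 1
        ring
      simp only [heq, mul_zero] at hcomp
      rw [hcomp, smul_eq_mul, ← integral_const_mul]
      refine setIntegral_congr_fun measurableSet_Ioi fun u _ => ?_
      simp [gAux]
    have hArows : ∫ u in Set.Ioi (0:ℝ), ∑ i, gAux c i u = ∑ i, ∫ u in Set.Ioi (0:ℝ), gAux c i u :=
      integral_finset_sum _ (fun i _ => gAux_int c hc i)
    have hHcont : Continuous (HAux c) :=
      continuous_finset_prod _ fun ℓ _ => PhiF_cont.comp (continuous_id.div_const _)
    have htend : Filter.Tendsto (HAux c) Filter.atTop (nhds 1) := by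
      have h1 : Filter.Tendsto (HAux c) Filter.atTop (nhds (∏ _ℓ : Fin r, (1:ℝ))) := by
        refine tendsto_finset_prod _ fun ℓ _ => ?_
        exact PhiF_tendsto.comp (Filter.tendsto_id.atTop_div_const (hc ℓ))
      simpa using h1
    have hFTC := integral_Ioi_of_hasDerivAt_of_tendsto
      (hHcont.continuousWithinAt) (fun x _ => HAux_hasDerivAt c hc x)
      (integrable_finset_sum _ (fun i _ => gAux_int c hc i)) htend
    have hH0 : HAux c 0 = 0 := by
      refine Finset.prod_eq_zero (Finset.mem_univ (⟨0, hr⟩ : Fin r)) ?_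
      simp [PhiF_zero]
    rw [hH0, sub_zero] at hFTC
    calc ∑ i, q i = ∑ i, ∫ u in Set.Ioi (0:ℝ), gAux c i u := by
          exact Finset.sum_congr rfl fun i _ => hqi i
      _ = ∫ u in Set.Ioi (0:ℝ), ∑ i, gAux c i u := hArows.symm
      _ = 1 := hFTC
  · -- monotone
    intro i j hij
    rcases eq_or_ne i j with rfl | hne
    · exact le_refl _
    rw [hq i, hq j]
    refine setIntegral_mono_on (hint j) (hint i) measurableSet_Ioi fun x hx => ?_
    have hx : (0:ℝ) < x := hx
    refine mul_le_mul_of_nonneg_left ?_ (gaussF_pos x).le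
    have hi_mem : i ∈ Finset.univ.erase j := Finset.mem_erase.2 ⟨hne, Finset.mem_univ i⟩
    have hj_mem : j ∈ Finset.univ.erase i := Finset.mem_erase.2 ⟨hne.symm, Finset.mem_univ j⟩
    rw [← Finset.mul_prod_erase _ _ hi_mem, ← Finset.mul_prod_erase _ _ hj_mem,
      Finset.erase_right_comm]
    refine mul_le_mul ?_ (Finset.prod_le_prod ?_ ?_) (Finset.prod_nonneg ?_)
      (PhiF_nonneg (hargnn i j x hx.le))
    · refine PhiF_mono (mul_le_mul_of_nonneg_right ?_ hx.le)
      rw [div_le_div_iff₀ (hc i) (hc j)]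
      nlinarith [hc i, hc j]
    · exact fun ℓ _ => PhiF_nonneg (hargnn j ℓ x hx.le)
    · intro ℓ _
      refine PhiF_mono (mul_le_mul_of_nonneg_right ?_ hx.le)
      have h1 := hc ℓ
      gcongr
    · exact fun ℓ _ => PhiF_nonneg (hargnn j ℓ x hx.le)

/-- The mixture weights `p_i` of the limiting mixture of Gaussians: for nonzero
`β_1, ..., β_r` and `k ≥ 3`, with
`p_i = ∫_0^∞ √(2/π) e^{−x²/2} ∏_{ℓ≠i} (∫_0^{(|β_i|/|β_ℓ|)^{1/(k−2)} x} √(2/π) e^{−y²/2} dy) dx`,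
each `p_i` is positive, they sum to `1`, and `p_i ≥ p_j` whenever `|β_i| ≥ |β_j|`. -/
theorem mixture_weights_properties (r k : ℕ) (hr : 1 ≤ r) (hk : 3 ≤ k)
    (β : Fin r → ℝ) (hβ : ∀ i, β i ≠ 0)
    (p : Fin r → ℝ)
    (hp : ∀ i, p i =
      ∫ x in Set.Ioi (0 : ℝ),
        Real.sqrt (2 / Real.pi) * Real.exp (-x ^ 2 / 2) *
          ∏ ℓ ∈ Finset.univ.erase i,
            ∫ y in Set.Ioo (0 : ℝ) ((|β i| / |β ℓ|) ^ ((1 : ℝ) / ((k : ℝ) - 2)) * x),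
              Real.sqrt (2 / Real.pi) * Real.exp (-y ^ 2 / 2)) :
    (∀ i, 0 < p i) ∧ (∑ i, p i = 1) ∧
      ∀ i j, |β j| ≤ |β i| → p j ≤ p i := by
  have hk2 : (0:ℝ) < (k:ℝ) - 2 := by
    have h3 : (3:ℝ) ≤ (k:ℝ) := by exact_mod_cast hk
    linarith
  have he : (0:ℝ) < (1:ℝ) / ((k:ℝ) - 2) := by positivity
  set c : Fin r → ℝ := fun i => |β i| ^ ((1:ℝ) / ((k:ℝ) - 2)) with hcdef
  have hc : ∀ i, 0 < c i := fun i => Real.rpow_pos_of_pos (abs_pos.2 (hβ i)) _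
  have hp' : ∀ i, p i = ∫ x in Set.Ioi (0:ℝ),
      gaussF x * ∏ ℓ ∈ Finset.univ.erase i, PhiF (c i / c ℓ * x) := by
    intro i
    rw [hp i]
    refine setIntegral_congr_fun measurableSet_Ioi fun x hx => ?_
    have hx : (0:ℝ) < x := hx
    show gaussF x * _ = gaussF x * _
    congr 1
    refine Finset.prod_congr rfl fun ℓ _ => ?_
    have harg : (|β i| / |β ℓ|) ^ ((1:ℝ) / ((k:ℝ) - 2)) * x = c i / c ℓ * x := by
      rw [hcdef, Real.div_rpow (abs_nonneg _) (abs_nonneg _)]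
    rw [harg]
    exact PhiF_eq_Ioo (mul_nonneg (div_nonneg (hc i).le (hc ℓ).le) hx.le)
  obtain ⟨h1, h2, h3⟩ := mixture_main hr c hc p hp'
  exact ⟨h1, h2, fun i j h => h3 i j (Real.rpow_le_rpow (abs_nonneg _) h he.le)⟩
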